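/- Suppose dim V = 2. If φ : 𝒢 → 𝒢' is a bijection such that for all X, Y ∈ 𝒢, X and Y are complementary if and only if φ(X) and φ(Y) are complementary, then dim V' = 2 and the cardinalities of K and K' are equal. Conversely, if dim V = dim V' = 2, then every bijection φ : 𝒢 → 𝒢' has this property, since any two distinct elements of 𝒢 (resp. 𝒢') are complementary. -/

import Mathlib

open Submodule

/-- `X` belongs to the Grassmannian 𝒢: `X` is isomorphic (as a `K`-vector space)
to the quotient `V ⧸ X`, equivalently to one (hence every) complement of `X`. -/
def InG (K V : Type*) [DivisionRing K] [AddCommGroup V] [Module K V]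
    (X : Submodule K V) : Prop :=
  Nonempty (X ≃ₗ[K] (V ⧸ X))

/-- `quotRank K V A B` is the dimension of the quotient space `B / (A ∩ B)`,
where `A ∩ B` is viewed as a subspace of `B`.  For `A ≤ B` this is `dim (B/A)`. -/
noncomputable def quotRank (K V : Type*) [DivisionRing K] [AddCommGroup V] [Module K V]
    (A B : Submodule K V) : Cardinal :=
  Module.rank K (↥B ⧸ (A.comap B.subtype))

/-- `X` and `Y` are adjacent: `dim ((X+Y)/X) = dim ((X+Y)/Y) = 1`. -/
def Adjacent (K V : Type*) [DivisionRing K] [AddCommGroup V] [Module K V]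
    (X Y : Submodule K V) : Prop :=
  quotRank K V X (X ⊔ Y) = 1 ∧ quotRank K V Y (X ⊔ Y) = 1

universe u u' v v'

section Aux
variable {K : Type u} {V : Type v} [DivisionRing K] [AddCommGroup V] [Module K V]

variable {K : Type u} {V : Type v} [DivisionRing K] [AddCommGroup V] [Module K V]

lemma aux_two_lt : (2 : Cardinal) < Cardinal.aleph0 := by
  exact_mod_cast Cardinal.nat_lt_aleph0 2

lemma aux_card_self {a : Cardinal} (h : a + a = 2) : a = 1 := by
  have ha : a < Cardinal.aleph0 := by
    have h1 : a ≤ a + a := self_le_add_left a a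
    rw [h] at h1
    exact h1.trans_lt aux_two_lt
  obtain ⟨n, rfl⟩ := Cardinal.lt_aleph0.1 ha
  have h2 : ((n + n : ℕ) : Cardinal) = ((2 : ℕ) : Cardinal) := by push_cast; rw [h]
  have h3 := Nat.cast_inj (R := Cardinal).1 h2
  have : n = 1 := by omega
  simp [this]

lemma aux_card_one {a : Cardinal} (h : a + 1 = 2) : a = 1 := by
  have ha : a < Cardinal.aleph0 := by
    have h1 : a ≤ a + 1 := le_self_add
    rw [h] at h1
    exact h1.trans_lt aux_two_lt
  obtain ⟨n, rfl⟩ := Cardinal.lt_aleph0.1 ha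
  have h2 : ((n + 1 : ℕ) : Cardinal) = ((2 : ℕ) : Cardinal) := by push_cast; rw [h]
  have h3 := Nat.cast_inj (R := Cardinal).1 h2
  have : n = 1 := by omega
  simp [this]

/-- For `dim V = 2`, members of 𝒢 have rank 1. -/
lemma aux_rank_one (h2 : Module.rank K V = 2) {X : Submodule K V} (hX : InG K V X) :
    Module.rank K X = 1 := by
  obtain ⟨e⟩ := hX
  have hq := X.rank_quotient_add_rank
  rw [← e.rank_eq, h2] at hq
  exact aux_card_self hq

lemma aux_fin (h2 : Module.rank K V = 2) : FiniteDimensional K V := by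
  have : Module.Finite K V := Module.rank_lt_aleph0_iff.1 (by rw [h2]; exact aux_two_lt)
  exact this

lemma aux_finrank (h2 : Module.rank K V = 2) : Module.finrank K V = 2 :=
  Module.finrank_eq_of_rank_eq (by exact_mod_cast h2)

lemma aux_finrank_one (h2 : Module.rank K V = 2) {X : Submodule K V} (hX : InG K V X) :
    Module.finrank K X = 1 :=
  Module.finrank_eq_of_rank_eq (by exact_mod_cast aux_rank_one h2 hX)

/-- a rank-one submodule is spanned by any of its nonzero vectors -/
lemma aux_span_eq (h2 : Module.rank K V = 2) {X : Submodule K V}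
    (hX : Module.finrank K X = 1) {v : V} (hv : v ∈ X) (hv0 : v ≠ 0) :
    (K ∙ v) = X := by
  have := aux_fin h2
  refine Submodule.eq_of_le_of_finrank_eq ((span_singleton_le_iff_mem v X).2 hv) ?_
  rw [finrank_span_singleton hv0, hX]

lemma aux_compl_of_ne (h2 : Module.rank K V = 2) {X Y : Submodule K V}
    (hX : InG K V X) (hY : InG K V Y) (hne : X ≠ Y) : IsCompl X Y := by
  have := aux_fin h2
  have hfX := aux_finrank_one h2 hX
  have hfY := aux_finrank_one h2 hY
  have hdis : X ⊓ Y = ⊥ := by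
    by_contra hbot
    obtain ⟨v, hv, hv0⟩ := Submodule.ne_bot_iff _ |>.1 hbot
    exact hne (((aux_span_eq h2 hfX hv.1 hv0).symm.trans (aux_span_eq h2 hfY hv.2 hv0)))
  have hsup : X ⊔ Y = ⊤ := by
    apply Submodule.eq_top_of_finrank_eq
    rw [aux_finrank h2]
    have := Submodule.finrank_sup_add_finrank_inf_eq X Y
    rw [hdis, hfX, hfY, finrank_bot] at this
    omega
  exact ⟨disjoint_iff.2 hdis, codisjoint_iff.2 hsup⟩

lemma aux_not_compl_self (h2 : Module.rank K V = 2) {X : Submodule K V}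
    (hX : InG K V X) : ¬ IsCompl X X := by
  intro h
  have hb : X = ⊥ := disjoint_self.1 h.disjoint
  have := aux_rank_one h2 hX
  rw [hb] at this
  simp at this

lemma aux_iff (h2 : Module.rank K V = 2) {X Y : Submodule K V}
    (hX : InG K V X) (hY : InG K V Y) : IsCompl X Y ↔ X ≠ Y := by
  constructor
  · rintro h rfl; exact aux_not_compl_self h2 hX h
  · exact aux_compl_of_ne h2 hX hY

/-- in dim 2, every rank-one submodule belongs to 𝒢 -/
lemma aux_inG (h2 : Module.rank K V = 2) {X : Submodule K V}
    (hX : Module.finrank K X = 1) : InG K V X := by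
  have := aux_fin h2
  apply FiniteDimensional.nonempty_linearEquiv_of_finrank_eq
  have := X.finrank_quotient_add_finrank
  rw [hX, aux_finrank h2] at this
  omega


/-- If some member of 𝒢 has rank > 1, the distant graph is not complete. -/
lemma aux_exists_bad {X : Submodule K V} (hX : InG K V X)
    (hbig : 1 < Module.rank K X) :
    ∃ Z : Submodule K V, InG K V Z ∧ Z ≠ X ∧ ¬ IsCompl X Z := by
  obtain ⟨Y, hc⟩ := X.exists_isCompl
  obtain ⟨eX⟩ := hX
  -- iso X ≃ Y
  let fXY : X ≃ₗ[K] Y := eX.trans (Submodule.quotientEquivOfIsCompl X Y hc)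
  -- a nonzero vector of X
  have hpos : 0 < Module.rank K X := lt_trans one_pos hbig
  obtain ⟨x₀, hx₀⟩ := rank_pos_iff_exists_ne_zero.1 hpos
  -- a line inside X and a complement
  set L : Submodule K X := K ∙ x₀ with hL
  obtain ⟨C, hLC⟩ := L.exists_isCompl
  have hCne : C ≠ ⊥ := by
    rintro rfl
    have hLtop : L = ⊤ := codisjoint_bot.1 hLC.codisjoint
    have h1 : Module.rank K X ≤ 1 := by
      have := rank_span_le (R := K) (M := X) {x₀}
      rw [Cardinal.mk_singleton] at this
      calc Module.rank K X = Module.rank K (⊤ : Submodule K X) := (rank_top K X).symm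
        _ = Module.rank K L := by rw [hLtop]
        _ ≤ 1 := this
    exact absurd h1 (not_le.2 hbig)
  obtain ⟨c, hcC, hc0⟩ := Submodule.ne_bot_iff _ |>.1 hCne
  -- linear map g : X → Y, zero on C, nonzero on x₀
  let proj : X →ₗ[K] L := Submodule.linearProjOfIsCompl L C hLC
  let g : X →ₗ[K] Y := fXY.toLinearMap ∘ₗ L.subtype ∘ₗ proj
  have hgx₀ : g x₀ ≠ 0 := by
    have hx₀L : x₀ ∈ L := Submodule.mem_span_singleton_self x₀
    have : proj x₀ = ⟨x₀, hx₀L⟩ := Submodule.linearProjOfIsCompl_apply_left hLC ⟨x₀, hx₀L⟩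
    simp only [g, LinearMap.comp_apply, this]
    intro h
    exact hx₀ (by simpa using fXY.injective (by simpa using h))
  have hgc : g c = 0 := by
    have : proj c = 0 := Submodule.linearProjOfIsCompl_apply_right' hLC hcC
    simp [g, this]
  -- the graph of g
  let h : X →ₗ[K] V := X.subtype + Y.subtype ∘ₗ g
  have hh : ∀ x : X, h x = (x : V) + (g x : V) := fun x => rfl
  set Z : Submodule K V := LinearMap.range h with hZ
  have hdisXY : ∀ v : V, v ∈ X → v ∈ Y → v = 0 := Submodule.disjoint_def.1 hc.disjoint
  have hmemZ : ∀ x : X, (x : V) + (g x : V) ∈ Z := fun x => ⟨x, rfl⟩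
  -- h is injective
  have hinj : Function.Injective h := by
    rw [← LinearMap.ker_eq_bot]
    rw [Submodule.eq_bot_iff]
    intro x hx
    rw [LinearMap.mem_ker] at hx
    rw [hh] at hx
    have hxY : (x : V) ∈ Y := by
      have : (x : V) = -(g x : V) := by linear_combination (norm := abel) hx
      rw [this]; exact Y.neg_mem (g x).2
    have : (x : V) = 0 := hdisXY _ x.2 hxY
    exact Subtype.ext this
  have eZ : X ≃ₗ[K] Z := LinearEquiv.ofInjective h hinj
  -- IsCompl Y Z
  have hYZ : IsCompl Y Z := by
    constructor
    · rw [disjoint_iff, Submodule.eq_bot_iff]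
      rintro v ⟨hvY, x, rfl⟩
      rw [hh] at hvY ⊢
      have hxY : (x : V) ∈ Y := by
        have : (x : V) = ((x : V) + (g x : V)) - (g x : V) := by abel
        rw [this]; exact Y.sub_mem hvY (g x).2
      have hx0 : (x : V) = 0 := hdisXY _ x.2 hxY
      have : x = 0 := Subtype.ext hx0
      rw [this]; simp
    · rw [codisjoint_iff, Submodule.eq_top_iff']
      intro v
      have hv : v ∈ X ⊔ Y := hc.codisjoint.eq_top ▸ Submodule.mem_top
      obtain ⟨vx, hvx, vy, hvy, rfl⟩ := Submodule.mem_sup.1 hv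
      have h1 : vy - (g ⟨vx, hvx⟩ : V) ∈ Y := Y.sub_mem hvy (g ⟨vx, hvx⟩).2
      have h2 : (vx + (g ⟨vx, hvx⟩ : V)) ∈ Z := hmemZ ⟨vx, hvx⟩
      have : vx + vy = (vy - (g ⟨vx, hvx⟩ : V)) + (vx + (g ⟨vx, hvx⟩ : V)) := by abel
      rw [this]
      exact Submodule.add_mem_sup h1 h2
  refine ⟨Z, ?_, ?_, ?_⟩
  · exact ⟨eZ.symm.trans (fXY.trans (Submodule.quotientEquivOfIsCompl Z Y hYZ.symm).symm)⟩
  · intro hZX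
    have h3 := hmemZ x₀
    rw [hZX] at h3
    have hgY : (g x₀ : V) ∈ X := by
      have h4 : (g x₀ : V) = ((x₀ : V) + (g x₀ : V)) - (x₀ : V) := by abel
      rw [h4]; exact X.sub_mem h3 x₀.2
    have : (g x₀ : V) = 0 := hdisXY _ hgY (g x₀).2
    exact hgx₀ (Subtype.ext this)
  · intro hcompl
    have hcZ : (c : V) ∈ Z := by
      have := hmemZ c
      rw [hgc] at this
      simpa using this
    have : (c : V) = 0 := Submodule.disjoint_def.1 hcompl.disjoint _ c.2 hcZ
    exact hc0 (Subtype.ext this)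

lemma aux_smul_cancel {c : K} {v : V} (h : c • v = 0) (hv : v ≠ 0) : c = 0 := by
  by_contra hc
  apply hv
  have := congrArg (fun w => c⁻¹ • w) h
  simpa [smul_smul, inv_mul_cancel₀ hc] using this

/-- Counting 𝒢 in dimension 2: it is equinumerous with `Option K`. -/
lemma aux_count (h2 : Module.rank K V = 2) :
    Nonempty ({X : Submodule K V // InG K V X} ≃ Option K) := by
  classical
  have := aux_fin h2
  obtain ⟨v₀, hv₀⟩ : ∃ v : V, v ≠ 0 := rank_pos_iff_exists_ne_zero.1 (by rw [h2]; norm_num)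
  have hXfr : Module.finrank K (K ∙ v₀) = 1 := finrank_span_singleton hv₀
  obtain ⟨Y, hc⟩ := (K ∙ v₀).exists_isCompl
  have hYfr : Module.finrank K Y = 1 := by
    have := Submodule.finrank_add_eq_of_isCompl hc
    rw [hXfr, aux_finrank h2] at this; omega
  have hYG : InG K V Y := aux_inG h2 hYfr
  have hdis : ∀ v : V, v ∈ (K ∙ v₀) → v ∈ Y → v = 0 := Submodule.disjoint_def.1 hc.disjoint
  let Ysub : {X : Submodule K V // InG K V X} := ⟨Y, hYG⟩
  have hspanG : ∀ y : Y, InG K V (K ∙ (v₀ + (y : V))) ∧ (K ∙ (v₀ + (y : V))) ≠ Y := by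
    intro y
    have hne0 : v₀ + (y : V) ≠ 0 := by
      intro h
      have h4 : v₀ = -(y : V) := eq_neg_of_add_eq_zero_left h
      exact hv₀ (hdis v₀ (mem_span_singleton_self v₀)
        (by rw [h4]; exact Y.neg_mem y.2))
    refine ⟨aux_inG h2 (finrank_span_singleton hne0), ?_⟩
    intro hEq
    have hy : v₀ + (y : V) ∈ Y := by
      have hm := mem_span_singleton_self (R := K) (v₀ + (y : V))
      rw [hEq] at hm
      exact hm
    have hvY : v₀ ∈ Y := by
      have h4 : v₀ = (v₀ + (y : V)) - (y : V) := by abel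
      rw [h4]; exact Y.sub_mem hy y.2
    exact hv₀ (hdis v₀ (mem_span_singleton_self v₀) hvY)
  let β : Y → {A : {X : Submodule K V // InG K V X} // A ≠ Ysub} := fun y =>
    ⟨⟨K ∙ (v₀ + (y : V)), (hspanG y).1⟩, fun h => (hspanG y).2 (congrArg Subtype.val h)⟩
  have hβbij : Function.Bijective β := by
    constructor
    · intro y₁ y₂ hEq
      have hsp : (K ∙ (v₀ + (y₁ : V))) = K ∙ (v₀ + (y₂ : V)) :=
        congrArg (fun A => A.val.val) hEq
      have hmem : v₀ + (y₂ : V) ∈ K ∙ (v₀ + (y₁ : V)) := by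
        rw [hsp]; exact mem_span_singleton_self _
      obtain ⟨cst, hcst⟩ := Submodule.mem_span_singleton.1 hmem
      have hsplit : cst • v₀ - v₀ = (y₂ : V) - cst • (y₁ : V) := by
        rw [smul_add] at hcst
        have := hcst
        linear_combination (norm := abel) this
      have hXmem : cst • v₀ - v₀ ∈ (K ∙ v₀) :=
        Submodule.sub_mem _ (Submodule.smul_mem _ cst (mem_span_singleton_self v₀))
          (mem_span_singleton_self v₀)
      have hYmem : cst • v₀ - v₀ ∈ Y := by
        rw [hsplit]; exact Y.sub_mem y₂.2 (Y.smul_mem cst y₁.2)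
      have h0 : cst • v₀ - v₀ = 0 := hdis _ hXmem hYmem
      have hc1 : cst = 1 := by
        have h5 : (cst - 1) • v₀ = 0 := by rw [sub_smul, one_smul]; exact h0
        have h6 : cst - 1 = 0 := aux_smul_cancel h5 hv₀
        have := sub_eq_zero.1 h6
        exact this
      have h7 := hsplit
      simp only [hc1, one_smul, sub_self] at h7
      have h8 : (y₂ : V) - (y₁ : V) = 0 := h7.symm
      have h9 : (y₁ : V) = (y₂ : V) := (sub_eq_zero.1 h8).symm
      exact Subtype.ext h9
    · rintro ⟨⟨A, hAG⟩, hAne⟩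
      have hAneY : A ≠ Y := fun h => hAne (Subtype.ext h)
      have hACompl : IsCompl A Y := aux_compl_of_ne h2 hAG hYG hAneY
      have hv₀mem : v₀ ∈ A ⊔ Y := by rw [hACompl.codisjoint.eq_top]; exact Submodule.mem_top
      obtain ⟨a, ha, yy, hyy, hsum⟩ := Submodule.mem_sup.1 hv₀mem
      have hane : a ≠ 0 := by
        rintro rfl
        rw [zero_add] at hsum
        exact hv₀ (hdis v₀ (mem_span_singleton_self v₀) (by rw [← hsum]; exact hyy))
      have hAspan : (K ∙ a) = A := aux_span_eq h2 (aux_finrank_one h2 hAG) ha hane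
      refine ⟨⟨-yy, Y.neg_mem hyy⟩, ?_⟩
      apply Subtype.ext
      apply Subtype.ext
      show (K ∙ (v₀ + -yy)) = A
      rw [← hAspan]
      congr 1
      have : a = v₀ - yy := by rw [← hsum]; abel
      rw [this, sub_eq_add_neg]
  obtain ⟨eY⟩ : Nonempty (Y ≃ₗ[K] K) :=
    FiniteDimensional.nonempty_linearEquiv_of_finrank_eq
      (by rw [hYfr, Module.finrank_self])
  exact ⟨((Equiv.optionSubtypeNe Ysub).symm).trans
    (Equiv.optionCongr ((Equiv.ofBijective β hβbij).symm.trans eY.toEquiv))⟩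

end Aux

/-- For `dim V = 2`: every isomorphism of distant graphs `φ : 𝒢 → 𝒢'` forces
`dim V' = 2` and `#K = #K'`. Conversely, if `dim V = dim V' = 2` then every
bijection `φ : 𝒢 → 𝒢'` is an isomorphism of distant graphs, since any two
distinct elements of 𝒢 (resp. 𝒢') are complementary. -/
theorem stmt_12 (K : Type u) (V : Type v) [DivisionRing K] [AddCommGroup V] [Module K V]
    (K' : Type u') (V' : Type v') [DivisionRing K'] [AddCommGroup V'] [Module K' V']
    (hG : Nonempty {X : Submodule K V // InG K V X})
    (hG' : Nonempty {X : Submodule K' V' // InG K' V' X}) :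
    ((Module.rank K V = 2) →
      ∀ φ : {X : Submodule K V // InG K V X} → {X : Submodule K' V' // InG K' V' X},
        Function.Bijective φ →
        (∀ X Y : {X : Submodule K V // InG K V X},
          IsCompl X.1 Y.1 ↔ IsCompl (φ X).1 (φ Y).1) →
        Module.rank K' V' = 2 ∧
          Cardinal.lift.{u'} (Cardinal.mk K) = Cardinal.lift.{u} (Cardinal.mk K')) ∧
    ((Module.rank K V = 2 ∧ Module.rank K' V' = 2) →
      ((∀ X Y : {X : Submodule K V // InG K V X}, X ≠ Y → IsCompl X.1 Y.1) ∧
       (∀ X Y : {X : Submodule K' V' // InG K' V' X}, X ≠ Y → IsCompl X.1 Y.1) ∧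
       ∀ φ : {X : Submodule K V // InG K V X} → {X : Submodule K' V' // InG K' V' X},
         Function.Bijective φ →
         ∀ X Y : {X : Submodule K V // InG K V X},
           IsCompl X.1 Y.1 ↔ IsCompl (φ X).1 (φ Y).1)) := by
  constructor
  · intro h2 φ hbij hpres
    have iffG : ∀ X Y : {X : Submodule K V // InG K V X}, IsCompl X.1 Y.1 ↔ X ≠ Y :=
      fun X Y => (aux_iff h2 X.2 Y.2).trans (not_congr Subtype.ext_iff).symm
    have iffG' : ∀ A B : {X : Submodule K' V' // InG K' V' X}, IsCompl A.1 B.1 ↔ A ≠ B := by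
      intro A B
      obtain ⟨X, rfl⟩ := hbij.2 A
      obtain ⟨Y, rfl⟩ := hbij.2 B
      rw [← hpres X Y, iffG X Y]
      exact not_congr hbij.1.eq_iff.symm
    obtain ⟨X'⟩ := hG'
    -- every member of 𝒢' has rank at most one
    have hle : Module.rank K' X'.1 ≤ 1 := by
      by_contra hlt
      push_neg at hlt
      obtain ⟨Z, hZG, hZne, hZnc⟩ := aux_exists_bad X'.2 hlt
      exact hZnc ((iffG' X' ⟨Z, hZG⟩).2
        (fun h => hZne (congrArg Subtype.val h).symm))
    -- and nonzero rank
    have hzero : ∀ (W : Type v') [AddCommGroup W] [Module K' W],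
        Module.rank K' W = 0 → ∀ w : W, w = 0 := by
      intro W _ _ h0 w
      obtain ⟨a, ha, haw⟩ := rank_eq_zero_iff.1 h0 w
      have := congrArg (fun z => a⁻¹ • z) haw
      simpa [smul_smul, inv_mul_cancel₀ ha] using this
    have hne0 : Module.rank K' X'.1 ≠ 0 := by
      intro h0
      obtain ⟨e⟩ := X'.2
      have hq : Module.rank K' (V' ⧸ X'.1) = 0 := by rw [← e.rank_eq]; exact h0
      have hV'0 : Module.rank K' V' = 0 := by
        rw [← X'.1.rank_quotient_add_rank, hq, h0, add_zero]
      have hWbot : ∀ W : Submodule K' V', W = ⊥ := by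
        intro W
        rw [Submodule.eq_bot_iff]
        intro x _
        exact hzero V' hV'0 x
      have hGsub : ∀ A B : {X : Submodule K' V' // InG K' V' X}, A = B := by
        intro A B
        exact Subtype.ext ((hWbot A.1).trans (hWbot B.1).symm)
      obtain ⟨eG⟩ := aux_count h2
      have h01 : eG.symm (some (0 : K)) ≠ eG.symm (some (1 : K)) := by
        intro h
        have := congrArg eG h
        simp only [Equiv.apply_symm_apply, Option.some.injEq] at this
        exact zero_ne_one this
      exact h01 (hbij.1 (hGsub (φ (eG.symm (some 0))) (φ (eG.symm (some 1)))))
    have hr1 : Module.rank K' X'.1 = 1 := by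
      rcases lt_or_eq_of_le hle with h | h
      · exact absurd (Cardinal.lt_one_iff_zero.1 h) hne0
      · exact h
    have h2' : Module.rank K' V' = 2 := by
      obtain ⟨e⟩ := X'.2
      have hq := X'.1.rank_quotient_add_rank
      rw [← e.rank_eq, hr1] at hq
      rw [← hq]
      norm_num
    refine ⟨h2', ?_⟩
    obtain ⟨eG⟩ := aux_count h2
    obtain ⟨eG'⟩ := aux_count h2'
    exact Cardinal.lift_mk_eq'.2
      ⟨Equiv.removeNone ((eG.symm.trans (Equiv.ofBijective φ hbij)).trans eG')⟩
  · rintro ⟨h2, h2'⟩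
    refine ⟨fun X Y hne => aux_compl_of_ne h2 X.2 Y.2 (fun h => hne (Subtype.ext h)),
      fun X Y hne => aux_compl_of_ne h2' X.2 Y.2 (fun h => hne (Subtype.ext h)), ?_⟩
    intro φ hbij X Y
    rw [aux_iff h2 X.2 Y.2, aux_iff h2' (φ X).2 (φ Y).2]
    exact not_congr (Subtype.ext_iff.symm.trans (hbij.1.eq_iff.symm.trans Subtype.ext_iff))
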